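/- Let ρ : ℝ³ → ℝ be a C¹ function with ρ(x) > 0 for all x, and let B : ℝ³ → ℝ³ be a C³ vector field with compact support. Define B* := B + curl((curl B)/ρ), i.e. B*(x) = B(x) + curl(x ↦ ρ(x)⁻¹·curl B(x))(x). Then ∫_{ℝ³} B(x) · B*(x) dx = ∫_{ℝ³} (‖B(x)‖² + ρ(x)⁻¹·‖curl B(x)‖²) dx. -/

import Mathlib

noncomputable section

open MeasureTheory Real

/-- Euclidean 3-space. -/
abbrev E3 : Type := EuclideanSpace ℝ (Fin 3)

/-- Build a vector in `E3` from three coordinates. -/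
def mk3 (a b c : ℝ) : E3 := (WithLp.equiv 2 (Fin 3 → ℝ)).symm ![a, b, c]

/-- Partial derivative in the `i`-th coordinate direction. -/
def pd (i : Fin 3) (f : E3 → ℝ) (x : E3) : ℝ :=
  fderiv ℝ f x (EuclideanSpace.single i 1)

/-- Curl of a vector field on `ℝ³`. -/
def ecurl (f : E3 → E3) (x : E3) : E3 :=
  mk3 (pd 1 (fun y => f y 2) x - pd 2 (fun y => f y 1) x)
      (pd 2 (fun y => f y 0) x - pd 0 (fun y => f y 2) x)
      (pd 0 (fun y => f y 1) x - pd 1 (fun y => f y 0) x)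

/-- Divergence of a vector field on `ℝ³`. -/
def ediv (f : E3 → E3) (x : E3) : ℝ :=
  pd 0 (fun y => f y 0) x + pd 1 (fun y => f y 1) x + pd 2 (fun y => f y 2) x

/-- Gradient of a scalar field on `ℝ³`. -/
def egrad (h : E3 → ℝ) (x : E3) : E3 :=
  mk3 (pd 0 h x) (pd 1 h x) (pd 2 h x)

/-- Cross product on `ℝ³`. -/
def cross3 (u w : E3) : E3 :=
  mk3 (u 1 * w 2 - u 2 * w 1) (u 2 * w 0 - u 0 * w 2) (u 0 * w 1 - u 1 * w 0)

/-- Advection `(g · ∇) f` of a vector field `f` along the vector `g`. -/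
def advect (g : E3) (f : E3 → E3) (x : E3) : E3 :=
  mk3 (∑ j, g j * pd j (fun y => f y 0) x)
      (∑ j, g j * pd j (fun y => f y 1) x)
      (∑ j, g j * pd j (fun y => f y 2) x)

/-- Componentwise Laplacian of a vector field on `ℝ³`. -/
def elap (f : E3 → E3) (x : E3) : E3 :=
  mk3 (∑ i, pd i (fun y => pd i (fun z => f z 0) y) x)
      (∑ i, pd i (fun y => pd i (fun z => f z 1) y) x)
      (∑ i, pd i (fun y => pd i (fun z => f z 2) y) x)

/-- Time derivative of a time-dependent vector field. -/
def tderiv (f : ℝ → E3 → E3) (t : ℝ) (x : E3) : E3 :=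
  deriv (fun s => f s x) t

namespace MHD5

lemma mk3_apply0 (a b c : ℝ) : mk3 a b c 0 = a := rfl
lemma mk3_apply1 (a b c : ℝ) : mk3 a b c 1 = b := rfl
lemma mk3_apply2 (a b c : ℝ) : mk3 a b c 2 = c := rfl
lemma mk3_zero : mk3 0 0 0 = 0 := by ext i; fin_cases i <;> rfl

lemma hcs_sub {f g : E3 → ℝ} (hf : HasCompactSupport f) (hg : HasCompactSupport g) :
    HasCompactSupport fun x => f x - g x := by
  apply HasCompactSupport.intro (IsCompact.union hf hg)
  intro x hx
  simp only [Set.mem_union, not_or] at hx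
  rw [image_eq_zero_of_notMem_tsupport hx.1, image_eq_zero_of_notMem_tsupport hx.2, sub_zero]

lemma inner3 (u v : E3) : (inner ℝ u v : ℝ) = u 0 * v 0 + u 1 * v 1 + u 2 * v 2 := by
  simp [PiLp.inner_apply, RCLike.inner_apply, Fin.sum_univ_three]
  ring

lemma continuous_pd {f : E3 → ℝ} (hf : ContDiff ℝ 1 f) (i : Fin 3) : Continuous (pd i f) :=
  (hf.continuous_fderiv one_ne_zero).clm_apply continuous_const

lemma contDiff_pd {n : ℕ} {f : E3 → ℝ} (hf : ContDiff ℝ (n + 1) f) (i : Fin 3) :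
    ContDiff ℝ n (pd i f) := by
  unfold pd
  exact (hf.fderiv_right (m := n) (by norm_cast)).clm_apply contDiff_const

lemma hcs_pd {f : E3 → ℝ} (hf : HasCompactSupport f) (i : Fin 3) : HasCompactSupport (pd i f) :=
  (hf.fderiv ℝ).comp_left (g := fun L : E3 →L[ℝ] ℝ => L (EuclideanSpace.single i 1)) rfl

lemma hcs_comp {f : E3 → E3} (hf : HasCompactSupport f) (k : Fin 3) :
    HasCompactSupport fun y => f y k :=
  hf.comp_left (g := fun v : E3 => v k) rfl

lemma integrable_mul_pd {f g : E3 → ℝ} (hf : Continuous f) (hg : ContDiff ℝ 1 g)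
    (hgs : HasCompactSupport g) (i : Fin 3) :
    MeasureTheory.Integrable (fun x : E3 => f x * pd i g x) :=
  (hf.mul (continuous_pd hg i)).integrable_of_hasCompactSupport (hcs_pd hgs i).mul_left

lemma integrable_pd_mul {f g : E3 → ℝ} (hf : ContDiff ℝ 1 f) (hgc : Continuous g)
    (hgs : HasCompactSupport g) (i : Fin 3) :
    MeasureTheory.Integrable (fun x : E3 => pd i f x * g x) :=
  ((continuous_pd hf i).mul hgc).integrable_of_hasCompactSupport hgs.mul_left

lemma ibp {f g : E3 → ℝ} (hf : ContDiff ℝ 1 f) (hg : ContDiff ℝ 1 g)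
    (hfs : HasCompactSupport f) (hgs : HasCompactSupport g) (i : Fin 3) :
    ∫ x : E3, f x * pd i g x = - ∫ x : E3, pd i f x * g x := by
  exact integral_mul_fderiv_eq_neg_fderiv_mul_of_integrable
    (integrable_pd_mul hf hg.continuous hgs i)
    (integrable_mul_pd hf.continuous hg hgs i)
    ((hf.continuous.mul hg.continuous).integrable_of_hasCompactSupport hgs.mul_left)
    (fun x _ => hf.differentiable one_ne_zero x) (fun x _ => hg.differentiable one_ne_zero x)

lemma curl_ibp {F G : E3 → E3} (hF : ContDiff ℝ 1 F) (hG : ContDiff ℝ 1 G)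
    (hFs : HasCompactSupport F) (hGs : HasCompactSupport G) :
    ∫ x : E3, (inner ℝ (G x) (ecurl F x) : ℝ) = ∫ x : E3, (inner ℝ (ecurl G x) (F x) : ℝ) := by
  have hF' : ∀ k, ContDiff ℝ 1 fun y => F y k := contDiff_euclidean.1 hF
  have hG' : ∀ k, ContDiff ℝ 1 fun y => G y k := contDiff_euclidean.1 hG
  have hFs' : ∀ k, HasCompactSupport fun y => F y k := hcs_comp hFs
  have hGs' : ∀ k, HasCompactSupport fun y => G y k := hcs_comp hGs
  have eL : ∀ x : E3, (inner ℝ (G x) (ecurl F x) : ℝ) =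
      G x 0 * pd 1 (fun y => F y 2) x - G x 0 * pd 2 (fun y => F y 1) x
      + (G x 1 * pd 2 (fun y => F y 0) x - G x 1 * pd 0 (fun y => F y 2) x)
      + (G x 2 * pd 0 (fun y => F y 1) x - G x 2 * pd 1 (fun y => F y 0) x) := by
    intro x
    rw [inner3]
    simp only [ecurl, mk3_apply0, mk3_apply1, mk3_apply2]
    ring
  have eR : ∀ x : E3, (inner ℝ (ecurl G x) (F x) : ℝ) =
      pd 1 (fun y => G y 2) x * F x 0 - pd 2 (fun y => G y 1) x * F x 0
      + (pd 2 (fun y => G y 0) x * F x 1 - pd 0 (fun y => G y 2) x * F x 1)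
      + (pd 0 (fun y => G y 1) x * F x 2 - pd 1 (fun y => G y 0) x * F x 2) := by
    intro x
    rw [inner3]
    simp only [ecurl, mk3_apply0, mk3_apply1, mk3_apply2]
    ring
  have iL1 := integrable_mul_pd (hG' 0).continuous (hF' 2) (hFs' 2) 1
  have iL2 := integrable_mul_pd (hG' 0).continuous (hF' 1) (hFs' 1) 2
  have iL3 := integrable_mul_pd (hG' 1).continuous (hF' 0) (hFs' 0) 2
  have iL4 := integrable_mul_pd (hG' 1).continuous (hF' 2) (hFs' 2) 0
  have iL5 := integrable_mul_pd (hG' 2).continuous (hF' 1) (hFs' 1) 0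
  have iL6 := integrable_mul_pd (hG' 2).continuous (hF' 0) (hFs' 0) 1
  have iR1 := integrable_pd_mul (hG' 2) (hF' 0).continuous (hFs' 0) 1
  have iR2 := integrable_pd_mul (hG' 1) (hF' 0).continuous (hFs' 0) 2
  have iR3 := integrable_pd_mul (hG' 0) (hF' 1).continuous (hFs' 1) 2
  have iR4 := integrable_pd_mul (hG' 2) (hF' 1).continuous (hFs' 1) 0
  have iR5 := integrable_pd_mul (hG' 1) (hF' 2).continuous (hFs' 2) 0
  have iR6 := integrable_pd_mul (hG' 0) (hF' 2).continuous (hFs' 2) 1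
  have iL12 : Integrable (fun x : E3 => G x 0 * pd 1 (fun y => F y 2) x - G x 0 * pd 2 (fun y => F y 1) x) := iL1.sub iL2
  have iL34 : Integrable (fun x : E3 => G x 1 * pd 2 (fun y => F y 0) x - G x 1 * pd 0 (fun y => F y 2) x) := iL3.sub iL4
  have iL56 : Integrable (fun x : E3 => G x 2 * pd 0 (fun y => F y 1) x - G x 2 * pd 1 (fun y => F y 0) x) := iL5.sub iL6
  have iL14 : Integrable (fun x : E3 => G x 0 * pd 1 (fun y => F y 2) x - G x 0 * pd 2 (fun y => F y 1) x + (G x 1 * pd 2 (fun y => F y 0) x - G x 1 * pd 0 (fun y => F y 2) x)) := iL12.add iL34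
  have iR12 : Integrable (fun x : E3 => pd 1 (fun y => G y 2) x * F x 0 - pd 2 (fun y => G y 1) x * F x 0) := iR1.sub iR2
  have iR34 : Integrable (fun x : E3 => pd 2 (fun y => G y 0) x * F x 1 - pd 0 (fun y => G y 2) x * F x 1) := iR3.sub iR4
  have iR56 : Integrable (fun x : E3 => pd 0 (fun y => G y 1) x * F x 2 - pd 1 (fun y => G y 0) x * F x 2) := iR5.sub iR6
  have iR14 : Integrable (fun x : E3 => pd 1 (fun y => G y 2) x * F x 0 - pd 2 (fun y => G y 1) x * F x 0 + (pd 2 (fun y => G y 0) x * F x 1 - pd 0 (fun y => G y 2) x * F x 1)) := iR12.add iR34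
  have e1 : ∫ x : E3, G x 0 * pd 1 (fun y => F y 2) x
      = - ∫ x : E3, pd 1 (fun y => G y 0) x * F x 2 := ibp (hG' 0) (hF' 2) (hGs' 0) (hFs' 2) 1
  have e2 : ∫ x : E3, G x 0 * pd 2 (fun y => F y 1) x
      = - ∫ x : E3, pd 2 (fun y => G y 0) x * F x 1 := ibp (hG' 0) (hF' 1) (hGs' 0) (hFs' 1) 2
  have e3 : ∫ x : E3, G x 1 * pd 2 (fun y => F y 0) x
      = - ∫ x : E3, pd 2 (fun y => G y 1) x * F x 0 := ibp (hG' 1) (hF' 0) (hGs' 1) (hFs' 0) 2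
  have e4 : ∫ x : E3, G x 1 * pd 0 (fun y => F y 2) x
      = - ∫ x : E3, pd 0 (fun y => G y 1) x * F x 2 := ibp (hG' 1) (hF' 2) (hGs' 1) (hFs' 2) 0
  have e5 : ∫ x : E3, G x 2 * pd 0 (fun y => F y 1) x
      = - ∫ x : E3, pd 0 (fun y => G y 2) x * F x 1 := ibp (hG' 2) (hF' 1) (hGs' 2) (hFs' 1) 0
  have e6 : ∫ x : E3, G x 2 * pd 1 (fun y => F y 0) x
      = - ∫ x : E3, pd 1 (fun y => G y 2) x * F x 0 := ibp (hG' 2) (hF' 0) (hGs' 2) (hFs' 0) 1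
  calc ∫ x : E3, (inner ℝ (G x) (ecurl F x) : ℝ)
      = ∫ x : E3, (G x 0 * pd 1 (fun y => F y 2) x - G x 0 * pd 2 (fun y => F y 1) x
        + (G x 1 * pd 2 (fun y => F y 0) x - G x 1 * pd 0 (fun y => F y 2) x)
        + (G x 2 * pd 0 (fun y => F y 1) x - G x 2 * pd 1 (fun y => F y 0) x)) :=
        integral_congr_ae (.of_forall eL)
    _ = (∫ x : E3, G x 0 * pd 1 (fun y => F y 2) x) - (∫ x : E3, G x 0 * pd 2 (fun y => F y 1) x)
        + ((∫ x : E3, G x 1 * pd 2 (fun y => F y 0) x) - (∫ x : E3, G x 1 * pd 0 (fun y => F y 2) x))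
        + ((∫ x : E3, G x 2 * pd 0 (fun y => F y 1) x) - (∫ x : E3, G x 2 * pd 1 (fun y => F y 0) x)) := by
        rw [integral_add iL14 iL56, integral_add iL12 iL34,
          integral_sub iL1 iL2, integral_sub iL3 iL4, integral_sub iL5 iL6]
    _ = (∫ x : E3, pd 1 (fun y => G y 2) x * F x 0) - (∫ x : E3, pd 2 (fun y => G y 1) x * F x 0)
        + ((∫ x : E3, pd 2 (fun y => G y 0) x * F x 1) - (∫ x : E3, pd 0 (fun y => G y 2) x * F x 1))
        + ((∫ x : E3, pd 0 (fun y => G y 1) x * F x 2) - (∫ x : E3, pd 1 (fun y => G y 0) x * F x 2)) := by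
        rw [e1, e2, e3, e4, e5, e6]; ring
    _ = ∫ x : E3, (pd 1 (fun y => G y 2) x * F x 0 - pd 2 (fun y => G y 1) x * F x 0
        + (pd 2 (fun y => G y 0) x * F x 1 - pd 0 (fun y => G y 2) x * F x 1)
        + (pd 0 (fun y => G y 1) x * F x 2 - pd 1 (fun y => G y 0) x * F x 2)) := by
        rw [integral_add iR14 iR56, integral_add iR12 iR34,
          integral_sub iR1 iR2, integral_sub iR3 iR4, integral_sub iR5 iR6]
    _ = ∫ x : E3, (inner ℝ (ecurl G x) (F x) : ℝ) := (integral_congr_ae (.of_forall eR)).symm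

end MHD5

/-- For the compressible constitutive relation `B* = B + curl((curl B)/ρ)`,
one has `∫ B · B* = ∫ (‖B‖² + ρ⁻¹ ‖curl B‖²)`. -/
theorem integral_B_dot_Bstar
    (ρ : E3 → ℝ) (hρ : ContDiff ℝ 1 ρ) (hρpos : ∀ x, 0 < ρ x)
    (B : E3 → E3) (hB : ContDiff ℝ 3 B) (hsupp : HasCompactSupport B)
    (Bs : E3 → E3)
    (hBs : ∀ x, Bs x = B x + ecurl (fun y => (ρ y)⁻¹ • ecurl B y) x) :
    (∫ x : E3, (inner ℝ (B x) (Bs x) : ℝ))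
      = ∫ x : E3, (‖B x‖^2 + (ρ x)⁻¹ * ‖ecurl B x‖^2) := by
  classical
  set F : E3 → E3 := fun y => (ρ y)⁻¹ • ecurl B y with hFdef
  have hB1 : ContDiff ℝ 1 B := hB.of_le (by norm_num)
  have hBk : ∀ k, ContDiff ℝ 3 fun y => B y k := contDiff_euclidean.1 hB
  have hBks : ∀ k, HasCompactSupport fun y => B y k := MHD5.hcs_comp hsupp
  -- curl B is C², componentwise
  have hCk : ∀ k, ContDiff ℝ 2 fun y => ecurl B y k := by
    intro k
    fin_cases k
    · exact ((MHD5.contDiff_pd (hBk 2) 1).sub (MHD5.contDiff_pd (hBk 1) 2))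
    · exact ((MHD5.contDiff_pd (hBk 0) 2).sub (MHD5.contDiff_pd (hBk 2) 0))
    · exact ((MHD5.contDiff_pd (hBk 1) 0).sub (MHD5.contDiff_pd (hBk 0) 1))
  have hC : ContDiff ℝ 2 (ecurl B) := contDiff_euclidean.2 hCk
  have hC1 : ContDiff ℝ 1 (ecurl B) := hC.of_le (by norm_num)
  -- curl B has compact support
  have hCks : ∀ k, HasCompactSupport fun y => ecurl B y k := by
    intro k
    fin_cases k
    · exact (MHD5.hcs_sub (MHD5.hcs_pd (hBks 2) 1) (MHD5.hcs_pd (hBks 1) 2))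
    · exact (MHD5.hcs_sub (MHD5.hcs_pd (hBks 0) 2) (MHD5.hcs_pd (hBks 2) 0))
    · exact (MHD5.hcs_sub (MHD5.hcs_pd (hBks 1) 0) (MHD5.hcs_pd (hBks 0) 1))
  have hCs : HasCompactSupport (ecurl B) := by
    apply HasCompactSupport.intro
      (IsCompact.union (IsCompact.union (hCks 0) (hCks 1)) (hCks 2))
    intro x hx
    simp only [Set.mem_union, not_or] at hx
    ext k
    fin_cases k
    · simpa using image_eq_zero_of_notMem_tsupport hx.1.1
    · simpa using image_eq_zero_of_notMem_tsupport hx.1.2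
    · simpa using image_eq_zero_of_notMem_tsupport hx.2
  have hρinv : ContDiff ℝ 1 fun x => (ρ x)⁻¹ := hρ.inv fun x => (hρpos x).ne'
  have hF : ContDiff ℝ 1 F := hρinv.smul hC1
  have hFs : HasCompactSupport F := by
    apply HasCompactSupport.intro hCs
    intro x hx
    simp [hFdef, image_eq_zero_of_notMem_tsupport hx]
  -- integrability of the two summands
  have intBB : MeasureTheory.Integrable (fun x : E3 => (inner ℝ (B x) (B x) : ℝ)) := by
    apply Continuous.integrable_of_hasCompactSupport
      (hB1.continuous.inner hB1.continuous)
    apply HasCompactSupport.intro hsupp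
    intro x hx
    simp [image_eq_zero_of_notMem_tsupport hx]
  have intBC : MeasureTheory.Integrable (fun x : E3 => (inner ℝ (B x) (ecurl F x) : ℝ)) := by
    have hcF : Continuous (ecurl F) := by
      have h' : ∀ k, ContDiff ℝ 1 fun y => F y k := contDiff_euclidean.1 hF
      have : Continuous fun x => (![pd 1 (fun y => F y 2) x - pd 2 (fun y => F y 1) x,
          pd 2 (fun y => F y 0) x - pd 0 (fun y => F y 2) x,
          pd 0 (fun y => F y 1) x - pd 1 (fun y => F y 0) x] : Fin 3 → ℝ) := by
        apply continuous_pi; intro i; fin_cases i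
        · exact (MHD5.continuous_pd (h' 2) 1).sub (MHD5.continuous_pd (h' 1) 2)
        · exact (MHD5.continuous_pd (h' 0) 2).sub (MHD5.continuous_pd (h' 2) 0)
        · exact (MHD5.continuous_pd (h' 1) 0).sub (MHD5.continuous_pd (h' 0) 1)
      exact ((PiLp.continuousLinearEquiv 2 ℝ (fun _ : Fin 3 => ℝ)).symm.continuous).comp this
    apply Continuous.integrable_of_hasCompactSupport (hB1.continuous.inner hcF)
    apply HasCompactSupport.intro hsupp
    intro x hx
    simp [image_eq_zero_of_notMem_tsupport hx]
  calc (∫ x : E3, (inner ℝ (B x) (Bs x) : ℝ))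
      = ∫ x : E3, ((inner ℝ (B x) (B x) : ℝ) + (inner ℝ (B x) (ecurl F x) : ℝ)) := by
        apply MeasureTheory.integral_congr_ae (Filter.Eventually.of_forall fun x => ?_)
        rw [hBs x, inner_add_right]
    _ = (∫ x : E3, (inner ℝ (B x) (B x) : ℝ)) + ∫ x : E3, (inner ℝ (B x) (ecurl F x) : ℝ) :=
        MeasureTheory.integral_add intBB intBC
    _ = (∫ x : E3, ‖B x‖^2) + ∫ x : E3, (inner ℝ (ecurl B x) (F x) : ℝ) := by
        rw [MHD5.curl_ibp hF hB1 hFs hsupp]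
        congr 1
        apply MeasureTheory.integral_congr_ae (Filter.Eventually.of_forall fun x => ?_)
        rw [real_inner_self_eq_norm_sq]
    _ = (∫ x : E3, ‖B x‖^2) + ∫ x : E3, (ρ x)⁻¹ * ‖ecurl B x‖^2 := by
        congr 1
        apply MeasureTheory.integral_congr_ae (Filter.Eventually.of_forall fun x => ?_)
        rw [hFdef, real_inner_smul_right, real_inner_self_eq_norm_sq]
    _ = ∫ x : E3, (‖B x‖^2 + (ρ x)⁻¹ * ‖ecurl B x‖^2) := by
        rw [← MeasureTheory.integral_add]
        · exact (hB1.continuous.norm.pow 2).integrable_of_hasCompactSupport <| by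
            apply HasCompactSupport.intro hsupp
            intro x hx
            simp [image_eq_zero_of_notMem_tsupport hx]
        · apply Continuous.integrable_of_hasCompactSupport
            ((hρinv.continuous).mul ((hC1.continuous.norm.pow 2)))
          apply HasCompactSupport.intro hCs
          intro x hx
          simp [image_eq_zero_of_notMem_tsupport hx]
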